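/- Let b ∈ ℂ and k₁ ∈ ℂ with k₁ ≠ 0, and set a = 1. The ℂ-bilinear product ∘ on A defined on basis elements by L_m∘L_n = 2bL_{m+n+1} − (n+1)L_{m+n}, L_m∘W_n = −(n+1)W_{m+n} + bW_{m+n+1}, W_m∘L_n = 0 and W_m∘W_n = k₁L_{m+n+1} is left-symmetric, and it is a compatible left-symmetric algebraic structure on the Lie algebra Coeff(W(1,b)). -/

import Mathlib

noncomputable section

/-- `A` is the free `ℂ`-vector space with basis `{L m : m ∈ ℤ} ∪ {W m : m ∈ ℤ}`. -/
abbrev A : Type := (ℤ ⊕ ℤ) →₀ ℂ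

/-- The basis vector `L m`. -/
def L (m : ℤ) : A := Finsupp.single (Sum.inl m) 1

/-- The basis vector `W m`. -/
def W (m : ℤ) : A := Finsupp.single (Sum.inr m) 1

instance instACG3 : AddCommGroup (A →ₗ[ℂ] A →ₗ[ℂ] A) :=
  LinearMap.addCommGroup (N₂ := A →ₗ[ℂ] A)
instance instMod3 : Module ℂ (A →ₗ[ℂ] A →ₗ[ℂ] A) :=
  LinearMap.module (M := A) (M₂ := A →ₗ[ℂ] A)
instance instACG4 : AddCommGroup (A →ₗ[ℂ] A →ₗ[ℂ] A →ₗ[ℂ] A) :=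
  LinearMap.addCommGroup (N₂ := A →ₗ[ℂ] A →ₗ[ℂ] A)

lemma sub3_apply (f g : A →ₗ[ℂ] A →ₗ[ℂ] A) (x : A) : (f - g) x = f x - g x := rfl
lemma zero3_apply (x : A) : (0 : A →ₗ[ℂ] A →ₗ[ℂ] A) x = 0 := rfl
lemma zero4_apply (x : A) : (0 : A →ₗ[ℂ] A →ₗ[ℂ] A →ₗ[ℂ] A) x = 0 := rfl

/-- Corollary 3.8 (4), on Coeff(W(1,b)), with `k₁ ≠ 0`. -/
theorem stmt15 (b k₁ : ℂ) (hk : k₁ ≠ 0)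
    -- `M` is the ℂ-bilinear product `∘` given on basis elements by:
    (M : A →ₗ[ℂ] A →ₗ[ℂ] A)
    (hLL : ∀ m n : ℤ, M (L m) (L n) = (2 * b) • L (m + n + 1) - ((n : ℂ) + 1) • L (m + n))
    (hLW : ∀ m n : ℤ, M (L m) (W n) = -((n : ℂ) + 1) • W (m + n) + b • W (m + n + 1))
    (hWL : ∀ m n : ℤ, M (W m) (L n) = 0)
    (hWW : ∀ m n : ℤ, M (W m) (W n) = k₁ • L (m + n + 1))
    -- `B` is the ℂ-bilinear Lie bracket of Coeff(W(a,b)) on basis elements: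
    (B : A →ₗ[ℂ] A →ₗ[ℂ] A)
    (hBLL : ∀ m n : ℤ, B (L m) (L n) = ((m : ℂ) - (n : ℂ)) • L (m + n))
    (hBLW : ∀ m n : ℤ, B (L m) (W n) =
      (((m : ℂ) + 1) * ((1 : ℂ) - 1) - ((n : ℂ) + 1)) • W (m + n)
        + b • W (m + n + 1))
    (hBWL : ∀ m n : ℤ, B (W n) (L m) = -B (L m) (W n))
    (hBWW : ∀ m n : ℤ, B (W m) (W n) = 0) :
    -- `∘ = M` is left-symmetric:
    ((∀ x y z : A, M (M x y) z - M x (M y z) = M (M y x) z - M y (M x z)) ∧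
    -- and compatible with the Lie bracket:
    (∀ x y : A, M x y - M y x = B x y)) := by
  have eL : ∀ m : ℤ, Finsupp.single (Sum.inl m) (1 : ℂ) = L m := fun _ => rfl
  have eW : ∀ m : ℤ, Finsupp.single (Sum.inr m) (1 : ℂ) = W m := fun _ => rfl
  -- the trilinear associator-difference map
  set f : A → A → (A →ₗ[ℂ] A) := fun x y =>
    M (M x y) - (M x).comp (M y) - M (M y x) + (M y).comp (M x) with hf
  have h1 : ∀ x₁ x₂ y, f (x₁ + x₂) y = f x₁ y + f x₂ y := by
    intro x₁ x₂ y
    simp only [hf, map_add, LinearMap.add_apply, LinearMap.add_comp, LinearMap.comp_add]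
    abel
  have h2 : ∀ (c : ℂ) x y, f (c • x) y = c • f x y := by
    intro c x y
    simp only [hf, map_smul, LinearMap.smul_apply, LinearMap.smul_comp, LinearMap.comp_smul]
    module
  have h3 : ∀ x y₁ y₂, f x (y₁ + y₂) = f x y₁ + f x y₂ := by
    intro x y₁ y₂
    simp only [hf, map_add, LinearMap.add_apply, LinearMap.add_comp, LinearMap.comp_add]
    abel
  have h4 : ∀ (c : ℂ) x y, f x (c • y) = c • f x y := by
    intro c x y
    simp only [hf, map_smul, LinearMap.smul_apply, LinearMap.smul_comp, LinearMap.comp_smul]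
    module
  set T : A →ₗ[ℂ] A →ₗ[ℂ] A →ₗ[ℂ] A := LinearMap.mk₂ ℂ f h1 h2 h3 h4 with hT
  have hT0 : T = 0 := by
    refine Finsupp.lhom_ext' fun s => LinearMap.ext_ring
      (Finsupp.lhom_ext' fun t => LinearMap.ext_ring
        (Finsupp.lhom_ext' fun u => LinearMap.ext_ring ?_))
    simp only [LinearMap.comp_apply, Finsupp.lsingle_apply, hT, LinearMap.mk₂_apply,
      zero4_apply, zero3_apply, LinearMap.zero_apply, hf, LinearMap.sub_apply,
      LinearMap.add_apply]
    rcases s with m | m <;> rcases t with n | n <;> rcases u with p | p <;>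
      simp only [eL, eW, hLL, hLW, hWL, hWW, map_add, map_sub, map_smul, map_neg,
        map_zero, LinearMap.add_apply, LinearMap.sub_apply, LinearMap.smul_apply,
        LinearMap.neg_apply, LinearMap.zero_apply, smul_add, smul_sub, smul_neg,
        smul_smul, smul_zero, neg_smul] <;>
      push_cast <;> ring_nf (config := { ifUnchanged := .silent }) <;> module
  have hC : M - M.flip - B = 0 := by
    refine Finsupp.lhom_ext' fun s => LinearMap.ext_ring
      (Finsupp.lhom_ext' fun t => LinearMap.ext_ring ?_)
    simp only [LinearMap.comp_apply, Finsupp.lsingle_apply, sub3_apply,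
      LinearMap.sub_apply, LinearMap.flip_apply, zero3_apply, LinearMap.zero_apply]
    rcases s with m | m <;> rcases t with n | n
    · simp only [eL, hLL, hBLL]
      rw [add_comm n m]
      module
    · simp only [eL, eW, hLW, hWL, hBLW]
      module
    · simp only [eL, eW, hLW, hWL, hBWL, hBLW]
      module
    · simp only [eW, hWW, hBWW]
      rw [add_comm n m]
      module
  constructor
  · intro x y z
    have h : M (M x y) z - M x (M y z) - M (M y x) z + M y (M x z) = 0 := by
      have := LinearMap.congr_fun (LinearMap.congr_fun (LinearMap.congr_fun hT0 x) y) z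
      simpa [hT, hf, LinearMap.mk₂_apply, LinearMap.sub_apply, LinearMap.add_apply,
        LinearMap.comp_apply, zero4_apply, zero3_apply] using this
    rw [← sub_eq_zero,
      show M (M x y) z - M x (M y z) - (M (M y x) z - M y (M x z))
        = M (M x y) z - M x (M y z) - M (M y x) z + M y (M x z) from by abel]
    exact h
  · intro x y
    have h : M x y - M y x - B x y = 0 := by
      have := LinearMap.congr_fun (LinearMap.congr_fun hC x) y
      simpa [sub3_apply, LinearMap.sub_apply, LinearMap.flip_apply, zero3_apply] using this
    rw [← sub_eq_zero]
    exact h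


end
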